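/- arXiv:2312.14256 — 4 statements merged into one kernel-verified Lean document; each statement's English description precedes it below -/
import Mathlib

section
/- Let F be a voting method whose domain is the set of all profiles with exactly two alternatives. Then the following are equivalent: (1) F satisfies anonymity, neutrality, and weak positive responsiveness; (2) F is majority voting, i.e., for every two-alternative profile P with X(P) = {a,b}, a ∈ F(P) if and only if Margin_P(a,b) ≥ 0. -/
/-!
Formalization of notions from "An extension of May's Theorem to three
alternatives: axiomatizing Minimax voting" by Holliday and Pacuit.

The set of voters is the countably infinite set `ℕ`; the set `α` of
alternatives is a type (assumed to have at least three elements where the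
paper assumes `|𝒳| ≥ 3`).
-/

namespace MayMinimax

/-- A profile: a finite set of voters drawn from the countably infinite set `ℕ`
of all voters, a finite set of alternatives, and, for each voter, a binary
relation on alternatives given as a Boolean-valued function:
`P.rel i a b = true` means that voter `i` ranks `a` above `b`. -/
structure Profile (α : Type*) where
  voters : Finset ℕ
  alts : Finset α
  rel : ℕ → α → α → Bool

variable {α : Type*} [DecidableEq α]

/-- Each voter's ballot is a strict weak order (asymmetric and negatively
transitive) on the alternatives. -/
def IsSWO (P : Profile α) : Prop :=
  ∀ i ∈ P.voters,
    (∀ a ∈ P.alts, ∀ b ∈ P.alts, P.rel i a b = true → P.rel i b a = false) ∧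
    (∀ a ∈ P.alts, ∀ b ∈ P.alts, ∀ c ∈ P.alts,
      P.rel i a b = false → P.rel i b c = false → P.rel i a c = false)

/-- The margin of `a` over `b` in `P`: the number of voters ranking `a` above
`b` minus the number of voters ranking `b` above `a`. -/
def Margin (P : Profile α) (a b : α) : ℤ :=
  ((P.voters.filter fun i => P.rel i a b = true).card : ℤ) -
    ((P.voters.filter fun i => P.rel i b a = true).card : ℤ)

/-- The number of voters ranking `a` above `b` in `P`. -/
def Support (P : Profile α) (a b : α) : ℕ :=
  (P.voters.filter fun i => P.rel i a b = true).card

/-- The Minimax score of `a`: the maximum margin of any other alternative over `a`. -/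
def MMScore (P : Profile α) (a : α) : ℤ :=
  WithBot.unbotD 0 (((P.alts.erase a).image fun b => Margin P b a).max)

/-- The set of Minimax winners: alternatives with minimal Minimax score. -/
def Minimax (P : Profile α) : Finset α :=
  P.alts.filter fun a => ∀ b ∈ P.alts, MMScore P a ≤ MMScore P b

/-- Restriction of a profile to a subset `Y` of the alternatives. -/
def Profile.restrict (P : Profile α) (Y : Finset α) : Profile α where
  voters := P.voters
  alts := Y
  rel := fun i a b => P.rel i a b && decide (a ∈ Y) && decide (b ∈ Y)

/-- `P.minus b` is `P` restricted to `X(P) \ {b}`. -/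
def Profile.minus (P : Profile α) (b : α) : Profile α :=
  P.restrict (P.alts.erase b)

/-- The combination `P + Q` of two profiles (used with disjoint voter sets and
the same set of alternatives). -/
def Profile.combine (P Q : Profile α) : Profile α where
  voters := P.voters ∪ Q.voters
  alts := P.alts
  rel := fun i a b => if i ∈ P.voters then P.rel i a b else Q.rel i a b

/-- `2P`: the profile `P` together with a copy of `P` on a disjoint set of voters. -/
def Profile.double (P : Profile α) : Profile α where
  voters := P.voters ∪ P.voters.image fun i => i + (P.voters.sup id + 1)
  alts := P.alts
  rel := fun i a b =>
    if i ∈ P.voters then P.rel i a b else P.rel (i - (P.voters.sup id + 1)) a b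

/-- `r` is (the strict part of) a linear order on the finite set `X`. -/
def IsLinearOn (r : α → α → Bool) (X : Finset α) : Prop :=
  (∀ a ∈ X, r a a = false) ∧
  (∀ a ∈ X, ∀ b ∈ X, ∀ c ∈ X, r a b = true → r b c = true → r a c = true) ∧
  (∀ a ∈ X, ∀ b ∈ X, a ≠ b → (r a b = true ∨ r b a = true)) ∧
  (∀ a ∈ X, ∀ b ∈ X, r a b = true → r b a = false)

/-- `Q` is a block profile for the set `X` of alternatives: it contains, for
each linear order of `X`, exactly one voter submitting that linear order, and
no other voters. -/
def IsBlock (X : Finset α) (Q : Profile α) : Prop :=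
  Q.alts = X ∧
  (∀ i ∈ Q.voters, IsLinearOn (Q.rel i) X) ∧
  (∀ r : α → α → Bool, IsLinearOn r X →
    ∃! i, i ∈ Q.voters ∧ ∀ a ∈ X, ∀ b ∈ X, Q.rel i a b = r a b)

/-- `P'` is obtained from `P` by one voter who ranked `a` uniquely last in `P`
switching to ranking `a` uniquely first in `P'`, with the restriction of that
voter's relation to `X(P) \ {a}` unchanged and all other voters' relations
unchanged. -/
def MoveLastToFirst (P P' : Profile α) (a : α) : Prop :=
  P'.voters = P.voters ∧ P'.alts = P.alts ∧ a ∈ P.alts ∧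
  ∃ i ∈ P.voters,
    (∀ b ∈ P.alts, b ≠ a → P.rel i b a = true) ∧
    (∀ b ∈ P.alts, b ≠ a → P'.rel i a b = true) ∧
    (∀ b ∈ P.alts, b ≠ a → ∀ c ∈ P.alts, c ≠ a → P'.rel i b c = P.rel i b c) ∧
    (∀ j ∈ P.voters, j ≠ i → ∀ x ∈ P.alts, ∀ y ∈ P.alts, P'.rel j x y = P.rel j x y)

/-- `P'` is obtained from `P` by adding one new voter who ranks `a` uniquely
first, all old voters' relations being unchanged. -/
def AddTopVoter (P P' : Profile α) (a : α) : Prop :=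
  P'.alts = P.alts ∧
  ∃ j, j ∉ P.voters ∧ P'.voters = insert j P.voters ∧
    (∀ b ∈ P.alts, b ≠ a → P'.rel j a b = true) ∧
    (∀ i ∈ P.voters, ∀ x ∈ P.alts, ∀ y ∈ P.alts, P'.rel i x y = P.rel i x y)

/-- `P'` is obtained from `P` by one voter improving the position of `a` in
their ballot, while nothing else changes. -/
def ImproveFor (P P' : Profile α) (a : α) : Prop :=
  P'.voters = P.voters ∧ P'.alts = P.alts ∧
  ∃ i ∈ P.voters,
    (∃ b ∈ P.alts, b ≠ a ∧
      ((P.rel i a b = false ∧ P'.rel i a b = true) ∨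
        (P.rel i b a = true ∧ P'.rel i b a = false))) ∧
    (∀ c ∈ P.alts, c ≠ a →
      (P.rel i a c = true → P'.rel i a c = true) ∧
      (P.rel i c a = false → P'.rel i c a = false)) ∧
    (∀ c ∈ P.alts, c ≠ a → ∀ d ∈ P.alts, d ≠ a → P'.rel i c d = P.rel i c d) ∧
    (∀ j ∈ P.voters, j ≠ i → ∀ x ∈ P.alts, ∀ y ∈ P.alts, P'.rel j x y = P.rel j x y)

/-- Anonymity relative to a domain `D` of profiles. -/
def Anonymity (D : Set (Profile α)) (F : Profile α → Finset α) : Prop :=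
  ∀ P ∈ D, ∀ P' ∈ D, P.alts = P'.alts →
    (∃ π : Equiv.Perm ℕ, P.voters.image π = P'.voters ∧
      ∀ i ∈ P.voters, ∀ a ∈ P.alts, ∀ b ∈ P.alts, P.rel i a b = P'.rel (π i) a b) →
    F P = F P'

/-- Neutrality relative to a domain `D` of profiles. -/
def Neutrality (D : Set (Profile α)) (F : Profile α → Finset α) : Prop :=
  ∀ P ∈ D, ∀ P' ∈ D, P.voters = P'.voters →
    ∀ τ : Equiv.Perm α, P.alts.image τ = P'.alts →
      (∀ i ∈ P.voters, ∀ a ∈ P.alts, ∀ b ∈ P.alts, P.rel i a b = P'.rel i (τ a) (τ b)) →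
      (F P).image τ = F P'

/-- Weak positive responsiveness relative to a domain `D` of profiles. -/
def WeakPositiveResponsiveness (D : Set (Profile α)) (F : Profile α → Finset α) : Prop :=
  ∀ P ∈ D, ∀ P' ∈ D, ∀ a ∈ F P, MoveLastToFirst P P' a → F P' = {a}

/-- (Full) positive responsiveness relative to a domain `D` of profiles. -/
def PositiveResponsiveness (D : Set (Profile α)) (F : Profile α → Finset α) : Prop :=
  ∀ P ∈ D, ∀ P' ∈ D, ∀ a ∈ F P, ImproveFor P P' a → F P' = {a}

/-- Positive involvement relative to a domain `D` of profiles. -/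
def PositiveInvolvement (D : Set (Profile α)) (F : Profile α → Finset α) : Prop :=
  ∀ P ∈ D, ∀ P' ∈ D, ∀ a ∈ F P, AddTopVoter P P' a → a ∈ F P'

/-- Near immunity to spoilers relative to a domain `D` of profiles. -/
def NearImmunityToSpoilers (D : Set (Profile α)) (F : Profile α → Finset α) : Prop :=
  ∀ P ∈ D, ∀ a ∈ P.alts, ∀ b ∈ P.alts,
    P.minus b ∈ D → P.restrict {a, b} ∈ D →
    F (P.minus b) = {a} → F (P.restrict {a, b}) = {a} → b ∉ F P → a ∈ F P

/-- Immunity to spoilers relative to a domain `D` of profiles. -/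
def ImmunityToSpoilers (D : Set (Profile α)) (F : Profile α → Finset α) : Prop :=
  ∀ P ∈ D, ∀ a ∈ P.alts, ∀ b ∈ P.alts,
    P.minus b ∈ D → P.restrict {a, b} ∈ D →
    a ∈ F (P.minus b) → F (P.restrict {a, b}) = {a} → b ∉ F P → a ∈ F P

/-- (Inclusion) homogeneity relative to a domain `D` of profiles. -/
def Homogeneity (D : Set (Profile α)) (F : Profile α → Finset α) : Prop :=
  ∀ P ∈ D, P.double ∈ D ∧ F P ⊆ F P.double

/-- Block preservation relative to a domain `D` of profiles. -/
def BlockPreservation (D : Set (Profile α)) (F : Profile α → Finset α) : Prop :=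
  ∀ P ∈ D, ∀ Q ∈ D, Disjoint P.voters Q.voters → IsBlock P.alts Q →
    P.combine Q ∈ D ∧ F P ⊆ F (P.combine Q)

/-- Condorcet consistency relative to a domain `D` of profiles. -/
def CondorcetConsistent (D : Set (Profile α)) (F : Profile α → Finset α) : Prop :=
  ∀ P ∈ D, ∀ c ∈ P.alts, (∀ x ∈ P.alts, x ≠ c → 0 < Margin P c x) → F P = {c}

/-- The domain of all (strict-weak-order) profiles with exactly two alternatives. -/
def Dom2 (α : Type*) : Set (Profile α) :=
  {P | IsSWO P ∧ P.voters.Nonempty ∧ P.alts.card = 2}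

/-- The domain of all profiles with two or three alternatives. -/
def Dom23 (α : Type*) : Set (Profile α) :=
  {P | IsSWO P ∧ P.voters.Nonempty ∧ (P.alts.card = 2 ∨ P.alts.card = 3)}

/-- The domain of all profiles with at least two alternatives. -/
def DomGe2 (α : Type*) : Set (Profile α) :=
  {P | IsSWO P ∧ P.voters.Nonempty ∧ 2 ≤ P.alts.card}

/-- The domain of all profiles. -/
def DomAll (α : Type*) : Set (Profile α) :=
  {P | IsSWO P ∧ P.voters.Nonempty ∧ P.alts.Nonempty}

/-- The support-based Minimax score of `a`: the maximum of `Support P b a`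
over all `b` with a positive margin over `a` (`0` if there is no such `b`). -/
def SupportMMScore (P : Profile α) (a : α) : ℕ :=
  WithBot.unbotD 0 ((((P.alts.erase a).filter fun b => 0 < Margin P b a).image fun b =>
    Support P b a).max)

/-- Support-based Minimax: alternatives with minimal support-based Minimax score. -/
def SupportMinimax (P : Profile α) : Finset α :=
  P.alts.filter fun a => ∀ b ∈ P.alts, SupportMMScore P a ≤ SupportMMScore P b

/-- The set of weak Condorcet winners in `P`. -/
def WeakCondorcetWinners (P : Profile α) : Finset α :=
  P.alts.filter fun a => ∀ x ∈ P.alts, 0 ≤ Margin P a x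

/-- The plurality score of `a`: the number of voters ranking `a` uniquely first. -/
def PluralityScore (P : Profile α) (a : α) : ℕ :=
  (P.voters.filter fun i => ∀ b ∈ P.alts, b ≠ a → P.rel i a b = true).card

/-- The Condorcet-Plurality voting method: the weak Condorcet winners if there
are any; otherwise the alternatives with maximal plurality score. -/
def CP (P : Profile α) : Finset α :=
  if (WeakCondorcetWinners P).Nonempty then WeakCondorcetWinners P
  else P.alts.filter fun a => ∀ b ∈ P.alts, PluralityScore P b ≤ PluralityScore P a

/-- The marginal Borda score of `a`: the sum of the margins of `a` over the
alternatives. -/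
def MarginalBorda (P : Profile α) (a : α) : ℤ :=
  ∑ b ∈ P.alts, Margin P a b

/-- Minimax MB: the Minimax winners with greatest marginal Borda score. -/
def MinimaxMB (P : Profile α) : Finset α :=
  (Minimax P).filter fun a => ∀ b ∈ Minimax P, MarginalBorda P b ≤ MarginalBorda P a

/-- `P` and `P'` have the same ordinal margin graph. -/
def SameOrdinalMarginGraph (P P' : Profile α) : Prop :=
  P.alts = P'.alts ∧
  (∀ a ∈ P.alts, ∀ b ∈ P.alts, (0 < Margin P a b ↔ 0 < Margin P' a b)) ∧
  (∀ a ∈ P.alts, ∀ b ∈ P.alts, ∀ c ∈ P.alts, ∀ d ∈ P.alts,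
    (Margin P c d ≤ Margin P a b ↔ Margin P' c d ≤ Margin P' a b))

/-- Ordinal margin invariance relative to a domain `D` of profiles. -/
def OrdinalMarginInvariance (D : Set (Profile α)) (F : Profile α → Finset α) : Prop :=
  ∀ P ∈ D, ∀ P' ∈ D, SameOrdinalMarginGraph P P' → F P = F P'

/-- `P` is uniquely-weighted: distinct pairs of distinct alternatives have
distinct margins. -/
def UniquelyWeighted (P : Profile α) : Prop :=
  ∀ a ∈ P.alts, ∀ b ∈ P.alts, ∀ c ∈ P.alts, ∀ d ∈ P.alts,
    a ≠ b → c ≠ d → (a, b) ≠ (c, d) → Margin P a b ≠ Margin P c d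

set_option linter.unusedSectionVars false


def wgt (r : α → α → Bool) (a b : α) : ℤ :=
  (if r a b = true then 1 else 0) - (if r b a = true then 1 else 0)

lemma margin_eq_sum (P : Profile α) (a b : α) :
    Margin P a b = ∑ j ∈ P.voters, wgt (P.rel j) a b := by
  unfold Margin wgt
  rw [Finset.sum_sub_distrib]
  congr 1 <;>
  · rw [Finset.card_filter]
    push_cast
    rfl

lemma margin_rev (P : Profile α) (a b : α) : Margin P b a = - Margin P a b := by
  unfold Margin; ring

lemma exists_swap_perm (s t : Finset ℕ) (hd : Disjoint s t) (hc : s.card = t.card) :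
    ∃ π : Equiv.Perm ℕ, (∀ x ∈ s, π x ∈ t) ∧ (∀ x ∈ t, π x ∈ s) ∧
      (∀ x, x ∉ s → x ∉ t → π x = x) := by
  classical
  let e := Finset.equivOfCardEq hc
  let f : ℕ → ℕ := fun x =>
    if hx : x ∈ s then (e ⟨x, hx⟩ : ℕ) else if hx : x ∈ t then (e.symm ⟨x, hx⟩ : ℕ) else x
  have hfs : ∀ x (hx : x ∈ s), f x = (e ⟨x, hx⟩ : ℕ) := by
    intro x hx; simp only [f, dif_pos hx]
  have hft : ∀ x (hx : x ∈ t), f x = (e.symm ⟨x, hx⟩ : ℕ) := by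
    intro x hx
    have hxs : x ∉ s := Finset.disjoint_right.mp hd hx
    simp only [f, dif_neg hxs, dif_pos hx]
  have hfo : ∀ x, x ∉ s → x ∉ t → f x = x := by
    intro x hx1 hx2; simp only [f, dif_neg hx1, dif_neg hx2]
  have hinv : Function.Involutive f := by
    intro x
    by_cases hx : x ∈ s
    · rw [hfs x hx]
      have h1 : (e ⟨x, hx⟩ : ℕ) ∈ t := (e ⟨x, hx⟩).2
      rw [hft _ h1]
      have : (⟨(e ⟨x, hx⟩ : ℕ), h1⟩ : {y // y ∈ t}) = e ⟨x, hx⟩ := rfl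
      rw [this, Equiv.symm_apply_apply]
    · by_cases hx2 : x ∈ t
      · rw [hft x hx2]
        have h1 : (e.symm ⟨x, hx2⟩ : ℕ) ∈ s := (e.symm ⟨x, hx2⟩).2
        rw [hfs _ h1]
        have : (⟨(e.symm ⟨x, hx2⟩ : ℕ), h1⟩ : {y // y ∈ s}) = e.symm ⟨x, hx2⟩ := rfl
        rw [this, Equiv.apply_symm_apply]
      · rw [hfo x hx hx2, hfo x hx hx2]
  refine ⟨hinv.toPerm f, ?_, ?_, ?_⟩
  · intro x hx
    show f x ∈ t
    rw [hfs x hx]; exact (e ⟨x, hx⟩).2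
  · intro x hx
    show f x ∈ s
    rw [hft x hx]; exact (e.symm ⟨x, hx⟩).2
  · intro x h1 h2
    show f x = x
    exact hfo x h1 h2

lemma mem_pair' {x a b : α} (h : x ∈ ({a, b} : Finset α)) : x = a ∨ x = b := by
  simpa using h

lemma rel_self_eq_false {P : Profile α} (h : IsSWO P) {j : ℕ} (hj : j ∈ P.voters)
    {x : α} (hx : x ∈ P.alts) : P.rel j x x = false := by
  cases hval : P.rel j x x with
  | false => rfl
  | true =>
    have := (h j hj).1 x hx x hx hval
    rw [hval] at this; exact this

lemma image_perm_of_maps (V : Finset ℕ) (π : Equiv.Perm ℕ) (h : ∀ x ∈ V, π x ∈ V) :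
    V.image π = V :=
  Finset.eq_of_subset_of_card_le
    (fun y hy => by obtain ⟨x, hx, rfl⟩ := Finset.mem_image.mp hy; exact h x hx)
    (le_of_eq (Finset.card_image_of_injective V π.injective).symm)

lemma margin_single (P P' : Profile α) (a b : α) (hv : P'.voters = P.voters)
    (i : ℕ) (hi : i ∈ P.voters)
    (hothers : ∀ j ∈ P.voters, j ≠ i → P'.rel j a b = P.rel j a b ∧ P'.rel j b a = P.rel j b a) :
    Margin P' a b = Margin P a b - wgt (P.rel i) a b + wgt (P'.rel i) a b := by
  rw [margin_eq_sum, margin_eq_sum, hv,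
    ← Finset.sum_erase_add _ (fun j => wgt (P'.rel j) a b) hi,
    ← Finset.sum_erase_add _ (fun j => wgt (P.rel j) a b) hi]
  have hs : ∑ j ∈ P.voters.erase i, wgt (P'.rel j) a b
      = ∑ j ∈ P.voters.erase i, wgt (P.rel j) a b := by
    refine Finset.sum_congr rfl fun j hj => ?_
    obtain ⟨h1, h2⟩ := hothers j (Finset.mem_of_mem_erase hj) (Finset.ne_of_mem_erase hj)
    unfold wgt; rw [h1, h2]
  rw [hs]; ring

lemma isSWO_comp {P : Profile α} (h : IsSWO P) (g : α → α) (hg : ∀ x ∈ P.alts, g x ∈ P.alts) :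
    IsSWO ⟨P.voters, P.alts, fun j x y => P.rel j (g x) (g y)⟩ := by
  intro i hi
  obtain ⟨h1, h2⟩ := h i hi
  exact ⟨fun a ha b hb hab => h1 _ (hg a ha) _ (hg b hb) hab,
    fun a ha b hb c hc hab hbc => h2 _ (hg a ha) _ (hg b hb) _ (hg c hc) hab hbc⟩


def swapProf (P : Profile α) (τ : α → α) : Profile α :=
  ⟨P.voters, P.alts, fun j x y => P.rel j (τ x) (τ y)⟩

def updProf (P : Profile α) (i : ℕ) (r : α → α → Bool) : Profile α :=
  ⟨P.voters, P.alts, fun j x y => if j = i then r x y else P.rel j x y⟩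

lemma isSWO_updBA {P : Profile α} (hswo : IsSWO P) (i : ℕ) {a b : α} (hab : a ≠ b)
    (halts : P.alts = {a, b}) :
    IsSWO (updProf P i (fun x y => decide (x = b ∧ y = a))) := by
  have hrel : ∀ x y : α, (updProf P i (fun x y => decide (x = b ∧ y = a))).rel i x y
      = decide (x = b ∧ y = a) := by intro x y; simp [updProf]
  intro j hj
  by_cases hji : j = i
  · subst hji
    constructor
    · intro x hx y hy hxy
      rw [hrel] at hxy
      rw [hrel, decide_eq_false_iff_not]
      rw [decide_eq_true_eq] at hxy
      rintro ⟨h1, h2⟩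
      rw [hxy.2] at h1
      exact hab h1
    · intro x hx y hy z hz h1 h2
      rw [hrel] at h1 h2 ⊢
      rw [decide_eq_false_iff_not] at h1 h2 ⊢
      rintro ⟨hxb, hza⟩
      rcases mem_pair' (halts ▸ hy) with hya | hyb
      · exact h1 ⟨hxb, hya⟩
      · exact h2 ⟨hyb, hza⟩
  · obtain ⟨h1, h2⟩ := hswo j hj
    constructor
    · intro x hx y hy hxy
      simp only [updProf, if_neg hji] at hxy ⊢
      exact h1 x hx y hy hxy
    · intro x hx y hy z hz hxy hyz
      simp only [updProf, if_neg hji] at hxy hyz ⊢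
      exact h2 x hx y hy z hz hxy hyz

set_option maxHeartbeats 1600000 in
lemma key_lemma (F : Profile α → Finset α)
    (hF : ∀ P ∈ Dom2 α, (F P).Nonempty ∧ F P ⊆ P.alts)
    (hA : Anonymity (Dom2 α) F) (hN : Neutrality (Dom2 α) F)
    (hW : WeakPositiveResponsiveness (Dom2 α) F) :
    ∀ m : ℕ, ∀ P ∈ Dom2 α, ∀ a b : α, a ≠ b → P.alts = {a, b} →
      Margin P a b = (m : ℤ) → a ∈ F P ∧ (0 < m → F P = {a}) := by
  intro m
  induction m using Nat.strong_induction_on with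
  | _ m IH =>
  intro P hP a b hab halts hm
  obtain ⟨hswo, hvne, hcard⟩ := hP
  have hP : P ∈ Dom2 α := ⟨hswo, hvne, hcard⟩
  have haa : a ∈ P.alts := by rw [halts]; exact Finset.mem_insert_self a _
  have hba : b ∈ P.alts := by rw [halts]; simp
  set A := P.voters.filter (fun i => P.rel i a b = true) with hAdef
  set B := P.voters.filter (fun i => P.rel i b a = true) with hBdef
  have hmemA : ∀ j, j ∈ A ↔ j ∈ P.voters ∧ P.rel j a b = true := by
    intro j; rw [hAdef]; exact Finset.mem_filter
  have hmemB : ∀ j, j ∈ B ↔ j ∈ P.voters ∧ P.rel j b a = true := by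
    intro j; rw [hBdef]; exact Finset.mem_filter
  have hmAB : (A.card : ℤ) - (B.card : ℤ) = (m : ℤ) := by
    rw [hAdef, hBdef]; exact hm
  have hdisj : Disjoint A B := by
    rw [Finset.disjoint_left]
    intro j hj1 hj2
    obtain ⟨hjv, h1⟩ := (hmemA j).mp hj1
    obtain ⟨-, h2⟩ := (hmemB j).mp hj2
    have := (hswo j hjv).1 a haa b hba h1
    rw [h2] at this
    simp at this
  have hτa : Equiv.swap a b a = b := Equiv.swap_apply_left a b
  have hτb : Equiv.swap a b b = a := Equiv.swap_apply_right a b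
  have hτmem : ∀ x ∈ P.alts, Equiv.swap a b x ∈ P.alts := by
    intro x hx
    rcases mem_pair' (halts ▸ hx) with rfl | rfl
    · rw [hτa]; exact hba
    · rw [hτb]; exact haa
  have himg : P.alts.image (Equiv.swap a b) = P.alts := by
    rw [halts, Finset.image_insert, Finset.image_singleton, hτa, hτb]
    exact Finset.pair_comm b a
  rcases Nat.eq_zero_or_pos m with rfl | hm1
  · -- m = 0
    have hcards : A.card = B.card := by omega
    obtain ⟨π, hπ1, hπ2, hπ3⟩ := exists_swap_perm A B hdisj hcards
    have hPτswo : IsSWO (swapProf P (Equiv.swap a b)) := isSWO_comp hswo _ hτmem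
    have hPτD : swapProf P (Equiv.swap a b) ∈ Dom2 α := ⟨hPτswo, hvne, hcard⟩
    have hneut : (F P).image (Equiv.swap a b) = F (swapProf P (Equiv.swap a b)) := by
      refine hN P hP _ hPτD rfl _ himg ?_
      intro j hj x hx y hy
      show P.rel j x y
          = P.rel j (Equiv.swap a b (Equiv.swap a b x)) (Equiv.swap a b (Equiv.swap a b y))
      rw [Equiv.swap_apply_self, Equiv.swap_apply_self]
    have hmaps : ∀ x ∈ P.voters, π x ∈ P.voters := by
      intro x hx
      by_cases h1 : x ∈ A
      · exact ((hmemB _).mp (hπ1 x h1)).1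
      · by_cases h2 : x ∈ B
        · exact ((hmemA _).mp (hπ2 x h2)).1
        · rw [hπ3 x h1 h2]; exact hx
    have hanon : F P = F (swapProf P (Equiv.swap a b)) := by
      refine hA P hP _ hPτD rfl ⟨π, image_perm_of_maps _ _ hmaps, ?_⟩
      intro j hj x hx y hy
      show P.rel j x y = P.rel (π j) (Equiv.swap a b x) (Equiv.swap a b y)
      have hπjV : π j ∈ P.voters := hmaps j hj
      by_cases hjA : j ∈ A
      · have hπjB := hπ1 j hjA
        have hj1 : P.rel j a b = true := ((hmemA j).mp hjA).2
        have hj2 : P.rel j b a = false := (hswo j hj).1 a haa b hba hj1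
        have hk1 : P.rel (π j) b a = true := ((hmemB _).mp hπjB).2
        have hk2 : P.rel (π j) a b = false := (hswo _ hπjV).1 b hba a haa hk1
        rcases mem_pair' (halts ▸ hx) with rfl | rfl <;>
          rcases mem_pair' (halts ▸ hy) with rfl | rfl <;>
          simp [hτa, hτb, hj1, hj2, hk1, hk2, rel_self_eq_false hswo hj haa,
            rel_self_eq_false hswo hπjV haa, rel_self_eq_false hswo hj hba,
            rel_self_eq_false hswo hπjV hba]
      · by_cases hjB : j ∈ B
        · have hπjA := hπ2 j hjB
          have hj1 : P.rel j b a = true := ((hmemB j).mp hjB).2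
          have hj2 : P.rel j a b = false := (hswo j hj).1 b hba a haa hj1
          have hk1 : P.rel (π j) a b = true := ((hmemA _).mp hπjA).2
          have hk2 : P.rel (π j) b a = false := (hswo _ hπjV).1 a haa b hba hk1
          rcases mem_pair' (halts ▸ hx) with rfl | rfl <;>
            rcases mem_pair' (halts ▸ hy) with rfl | rfl <;>
            simp [hτa, hτb, hj1, hj2, hk1, hk2, rel_self_eq_false hswo hj haa,
              rel_self_eq_false hswo hπjV haa, rel_self_eq_false hswo hj hba,
              rel_self_eq_false hswo hπjV hba]
        · have hfix : π j = j := hπ3 j hjA hjB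
          have hj1 : P.rel j a b = false := by
            cases hval : P.rel j a b
            · rfl
            · exact absurd ((hmemA j).mpr ⟨hj, hval⟩) hjA
          have hj2 : P.rel j b a = false := by
            cases hval : P.rel j b a
            · rfl
            · exact absurd ((hmemB j).mpr ⟨hj, hval⟩) hjB
          rcases mem_pair' (halts ▸ hx) with rfl | rfl <;>
            rcases mem_pair' (halts ▸ hy) with rfl | rfl <;>
            simp [hfix, hτa, hτb, hj1, hj2, rel_self_eq_false hswo hj haa,
              rel_self_eq_false hswo hj hba]
    obtain ⟨x, hxF⟩ := (hF P hP).1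
    have hsub := (hF P hP).2
    have haF : a ∈ F P := by
      rcases mem_pair' (halts ▸ hsub hxF) with h | h
      · rwa [h] at hxF
      · rw [h] at hxF
        have hmem : a ∈ (F P).image (Equiv.swap a b) :=
          Finset.mem_image.mpr ⟨b, hxF, hτb⟩
        rw [hneut, ← hanon] at hmem
        exact hmem
    exact ⟨haF, fun h => absurd h (lt_irrefl 0)⟩
  · -- m ≥ 1
    have hAne : A.Nonempty := Finset.card_pos.mp (by omega)
    obtain ⟨i, hiA⟩ := hAne
    have hiV : i ∈ P.voters := ((hmemA i).mp hiA).1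
    have hi_ab : P.rel i a b = true := ((hmemA i).mp hiA).2
    have hi_ba : P.rel i b a = false := (hswo i hiV).1 a haa b hba hi_ab
    set Pm := updProf P i (fun x y => decide (x = b ∧ y = a)) with hPmdef
    have hPmswo : IsSWO Pm := isSWO_updBA hswo i hab halts
    have hPmD : Pm ∈ Dom2 α := ⟨hPmswo, hvne, hcard⟩
    have hMm : Margin Pm a b = (m : ℤ) - 2 := by
      have e1 : wgt (P.rel i) a b = 1 := by simp [wgt, hi_ab, hi_ba]
      have e2 : wgt (Pm.rel i) a b = -1 := by
        simp [hPmdef, wgt, updProf, hab, Ne.symm hab]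
      rw [margin_single P Pm a b rfl i hiV
        (fun j hj hji => ⟨by simp [hPmdef, updProf, hji], by simp [hPmdef, updProf, hji]⟩),
        hm, e1, e2]
      ring
    have hmltf : MoveLastToFirst Pm P a := by
      refine ⟨rfl, rfl, haa, i, hiV, ?_, ?_, ?_, ?_⟩
      · intro c hc hca
        rcases mem_pair' (show c ∈ ({a, b} : Finset α) from halts ▸ hc) with h | h
        · exact absurd h hca
        · rw [h]; simp [hPmdef, updProf]
      · intro c hc hca
        rcases mem_pair' (show c ∈ ({a, b} : Finset α) from halts ▸ hc) with h | h
        · exact absurd h hca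
        · rw [h]; exact hi_ab
      · intro c hc hca d hd hda
        rcases mem_pair' (show c ∈ ({a, b} : Finset α) from halts ▸ hc) with h | h
        · exact absurd h hca
        · rcases mem_pair' (show d ∈ ({a, b} : Finset α) from halts ▸ hd) with h' | h'
          · exact absurd h' hda
          · rw [h, h']; simp [hPmdef, updProf, Ne.symm hab, rel_self_eq_false hswo hiV hba]
      · intro j hj hji x hx y hy
        simp [hPmdef, updProf, hji]
    by_cases hm2 : 2 ≤ m
    · have hmc : Margin Pm a b = ((m - 2 : ℕ) : ℤ) := by rw [hMm]; omega
      obtain ⟨haPm, -⟩ := IH (m - 2) (by omega) Pm hPmD a b hab halts hmc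
      have hFP := hW Pm hPmD P hP a haPm hmltf
      exact ⟨by rw [hFP]; exact Finset.mem_singleton_self a, fun _ => hFP⟩
    · -- m = 1
      by_cases haPm : a ∈ F Pm
      · have hFP := hW Pm hPmD P hP a haPm hmltf
        exact ⟨by rw [hFP]; exact Finset.mem_singleton_self a, fun _ => hFP⟩
      · have hsubPm := (hF Pm hPmD).2
        obtain ⟨x, hxF⟩ := (hF Pm hPmD).1
        have hFPm : F Pm = {b} := by
          have hall : ∀ y ∈ F Pm, y = b := by
            intro y hy
            rcases mem_pair' (show y ∈ ({a, b} : Finset α) from halts ▸ hsubPm hy)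
              with rfl | rfl
            · exact absurd hy haPm
            · rfl
          rw [Finset.eq_singleton_iff_unique_mem]
          exact ⟨(hall x hxF) ▸ hxF, hall⟩
        set Pσ := swapProf Pm (Equiv.swap a b) with hPσdef
        have hPσswo : IsSWO Pσ := isSWO_comp hPmswo _ hτmem
        have hPσD : Pσ ∈ Dom2 α := ⟨hPσswo, hvne, hcard⟩
        have hneut : (F Pm).image (Equiv.swap a b) = F Pσ := by
          refine hN Pm hPmD _ hPσD rfl _ himg ?_
          intro j hj x hx y hy
          show Pm.rel j x y
              = Pm.rel j (Equiv.swap a b (Equiv.swap a b x)) (Equiv.swap a b (Equiv.swap a b y))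
          rw [Equiv.swap_apply_self, Equiv.swap_apply_self]
        have hFPσ : F Pσ = {a} := by
          rw [← hneut, hFPm, Finset.image_singleton, hτb]
        have hdisj2 : Disjoint B (A.erase i) :=
          hdisj.symm.mono_right (Finset.erase_subset i A)
        have hcards2 : B.card = (A.erase i).card := by
          rw [Finset.card_erase_of_mem hiA]; omega
        obtain ⟨π, hπ1, hπ2, hπ3⟩ := exists_swap_perm B (A.erase i) hdisj2 hcards2
        have hmaps : ∀ x ∈ P.voters, π x ∈ P.voters := by
          intro x hx
          by_cases h1 : x ∈ B
          · exact ((hmemA _).mp (Finset.mem_of_mem_erase (hπ1 x h1))).1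
          · by_cases h2 : x ∈ A.erase i
            · exact ((hmemB _).mp (hπ2 x h2)).1
            · rw [hπ3 x h1 h2]; exact hx
        have hanon : F Pσ = F P := by
          refine hA Pσ hPσD P hP rfl ⟨π, image_perm_of_maps _ _ hmaps, ?_⟩
          intro j hj x hx y hy
          replace hj : j ∈ P.voters := hj
          replace hx : x ∈ P.alts := hx
          replace hy : y ∈ P.alts := hy
          have hjV : j ∈ P.voters := hj
          have hπjV : π j ∈ P.voters := hmaps j hjV
          show (if j = i then decide (Equiv.swap a b x = b ∧ Equiv.swap a b y = a)
              else P.rel j (Equiv.swap a b x) (Equiv.swap a b y)) = P.rel (π j) x y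
          by_cases hjB : j ∈ B
          · have hji : j ≠ i := fun h => Finset.disjoint_left.mp hdisj hiA (h ▸ hjB)
            have hπjA : π j ∈ A := Finset.mem_of_mem_erase (hπ1 j hjB)
            have hj1 : P.rel j b a = true := ((hmemB j).mp hjB).2
            have hj2 : P.rel j a b = false := (hswo j hjV).1 b hba a haa hj1
            have hk1 : P.rel (π j) a b = true := ((hmemA _).mp hπjA).2
            have hk2 : P.rel (π j) b a = false := (hswo _ hπjV).1 a haa b hba hk1
            rcases mem_pair' (halts ▸ hx) with rfl | rfl <;>
              rcases mem_pair' (halts ▸ hy) with rfl | rfl <;>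
              simp [hji, hτa, hτb, hj1, hj2, hk1, hk2, rel_self_eq_false hswo hjV haa,
                rel_self_eq_false hswo hπjV haa, rel_self_eq_false hswo hjV hba,
                rel_self_eq_false hswo hπjV hba]
          · by_cases hjAe : j ∈ A.erase i
            · have hji : j ≠ i := Finset.ne_of_mem_erase hjAe
              have hπjB : π j ∈ B := hπ2 j hjAe
              have hj1 : P.rel j a b = true :=
                ((hmemA j).mp (Finset.mem_of_mem_erase hjAe)).2
              have hj2 : P.rel j b a = false := (hswo j hjV).1 a haa b hba hj1
              have hk1 : P.rel (π j) b a = true := ((hmemB _).mp hπjB).2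
              have hk2 : P.rel (π j) a b = false := (hswo _ hπjV).1 b hba a haa hk1
              rcases mem_pair' (halts ▸ hx) with rfl | rfl <;>
                rcases mem_pair' (halts ▸ hy) with rfl | rfl <;>
                simp [hji, hτa, hτb, hj1, hj2, hk1, hk2, rel_self_eq_false hswo hjV haa,
                  rel_self_eq_false hswo hπjV haa, rel_self_eq_false hswo hjV hba,
                  rel_self_eq_false hswo hπjV hba]
            · have hfix : π j = j := hπ3 j hjB hjAe
              by_cases hji : j = i
              · subst hji
                rcases mem_pair' (halts ▸ hx) with rfl | rfl <;>
                  rcases mem_pair' (halts ▸ hy) with rfl | rfl <;>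
                  simp [hfix, hτa, hτb, hi_ab, hi_ba, hab, Ne.symm hab,
                    rel_self_eq_false hswo hiV haa, rel_self_eq_false hswo hiV hba]
              · have hjA : j ∉ A := fun h => hjAe (Finset.mem_erase.mpr ⟨hji, h⟩)
                have hj1 : P.rel j a b = false := by
                  cases hval : P.rel j a b
                  · rfl
                  · exact absurd ((hmemA j).mpr ⟨hjV, hval⟩) hjA
                have hj2 : P.rel j b a = false := by
                  cases hval : P.rel j b a
                  · rfl
                  · exact absurd ((hmemB j).mpr ⟨hjV, hval⟩) hjB
                rcases mem_pair' (halts ▸ hx) with rfl | rfl <;>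
                  rcases mem_pair' (halts ▸ hy) with rfl | rfl <;>
                  simp [hfix, hji, hτa, hτb, hj1, hj2, rel_self_eq_false hswo hjV haa,
                    rel_self_eq_false hswo hjV hba]
        have hFP : F P = {a} := by rw [← hanon]; exact hFPσ
        exact ⟨by rw [hFP]; exact Finset.mem_singleton_self a, fun _ => hFP⟩

/-- **May's Theorem.** A voting method on the domain of two-alternative
profiles satisfies anonymity, neutrality, and weak positive responsiveness
iff it is majority voting. -/
theorem mays_theorem {α : Type*} [DecidableEq α]
    (hX : ∃ x y z : α, x ≠ y ∧ x ≠ z ∧ y ≠ z)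
    (F : Profile α → Finset α)
    (hF : ∀ P ∈ Dom2 α, (F P).Nonempty ∧ F P ⊆ P.alts) :
    (Anonymity (Dom2 α) F ∧ Neutrality (Dom2 α) F ∧
        WeakPositiveResponsiveness (Dom2 α) F) ↔
      (∀ P ∈ Dom2 α, ∀ a b : α, P.alts = {a, b} →
        (a ∈ F P ↔ 0 ≤ Margin P a b)) := by
  constructor
  · rintro ⟨hA, hN, hW⟩ P hP a b halts
    have hab : a ≠ b := by
      rintro rfl
      have h2 := hP.2.2
      rw [halts] at h2
      simp at h2
    constructor
    · intro haF
      by_contra hneg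
      push_neg at hneg
      have hpos : Margin P b a = ((-Margin P a b).toNat : ℤ) := by
        rw [margin_rev]; omega
      have hk := key_lemma F hF hA hN hW (-Margin P a b).toNat P hP b a hab.symm
        (by rw [halts]; exact Finset.pair_comm a b) hpos
      have hFP : F P = {b} := hk.2 (by omega)
      rw [hFP] at haF
      exact hab (Finset.mem_singleton.mp haF)
    · intro hm
      exact (key_lemma F hF hA hN hW (Margin P a b).toNat P hP a b hab halts (by omega)).1
  · intro H
    refine ⟨?_, ?_, ?_⟩
    · -- Anonymity
      intro P hP P' hP' halts hex
      obtain ⟨π, himg, hrel⟩ := hex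
      obtain ⟨a, b, hab, hpab⟩ := Finset.card_eq_two.mp hP.2.2
      have hpab' : P'.alts = {a, b} := halts ▸ hpab
      have haP : a ∈ P.alts := by rw [hpab]; exact Finset.mem_insert_self a _
      have hbP : b ∈ P.alts := by rw [hpab]; simp
      have hmargin : ∀ x y : α, x ∈ P.alts → y ∈ P.alts → Margin P' x y = Margin P x y := by
        intro x y hx hy
        rw [margin_eq_sum, margin_eq_sum, ← himg,
          Finset.sum_image (fun u _ v _ h => π.injective h)]
        refine Finset.sum_congr rfl fun j hj => ?_
        unfold wgt
        rw [← hrel j hj x hx y hy, ← hrel j hj y hy x hx]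
      have ha' : a ∈ F P ↔ a ∈ F P' := by
        rw [H P hP a b hpab, H P' hP' a b hpab', hmargin a b haP hbP]
      have hb' : b ∈ F P ↔ b ∈ F P' := by
        rw [H P hP b a (hpab.trans (Finset.pair_comm a b)),
          H P' hP' b a (hpab'.trans (Finset.pair_comm a b)), hmargin b a hbP haP]
      ext x
      by_cases hx : x ∈ P.alts
      · rcases mem_pair' (hpab ▸ hx) with h | h
        · rw [h]; exact ha'
        · rw [h]; exact hb'
      · constructor
        · intro h; exact absurd ((hF P hP).2 h) hx
        · intro h
          have hh := (hF P' hP').2 h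
          rw [← halts] at hh
          exact absurd hh hx
    · -- Neutrality
      intro P hP P' hP' hvoters τ himg hrel
      obtain ⟨a, b, hab, hpab⟩ := Finset.card_eq_two.mp hP.2.2
      have hpab' : P'.alts = {τ a, τ b} := by
        rw [← himg, hpab, Finset.image_insert, Finset.image_singleton]
      have haP : a ∈ P.alts := by rw [hpab]; exact Finset.mem_insert_self a _
      have hbP : b ∈ P.alts := by rw [hpab]; simp
      have hm1 : Margin P' (τ a) (τ b) = Margin P a b := by
        rw [margin_eq_sum, margin_eq_sum, ← hvoters]
        refine Finset.sum_congr rfl fun j hj => ?_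
        unfold wgt
        rw [← hrel j hj a haP b hbP, ← hrel j hj b hbP a haP]
      have hm2 : Margin P' (τ b) (τ a) = Margin P b a := by
        rw [margin_eq_sum, margin_eq_sum, ← hvoters]
        refine Finset.sum_congr rfl fun j hj => ?_
        unfold wgt
        rw [← hrel j hj a haP b hbP, ← hrel j hj b hbP a haP]
      have hiffa : a ∈ F P ↔ τ a ∈ F P' := by
        rw [H P hP a b hpab, H P' hP' (τ a) (τ b) hpab', hm1]
      have hiffb : b ∈ F P ↔ τ b ∈ F P' := by
        rw [H P hP b a (hpab.trans (Finset.pair_comm a b)),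
          H P' hP' (τ b) (τ a) (hpab'.trans (Finset.pair_comm _ _)), hm2]
      ext x
      constructor
      · intro hxm
        obtain ⟨y, hyF, rfl⟩ := Finset.mem_image.mp hxm
        rcases mem_pair' (hpab ▸ (hF P hP).2 hyF) with h | h
        · rw [h]; exact hiffa.mp (h ▸ hyF)
        · rw [h]; exact hiffb.mp (h ▸ hyF)
      · intro hxF
        have hx' : x ∈ P'.alts := (hF P' hP').2 hxF
        rcases mem_pair' (hpab' ▸ hx') with h | h
        · rw [h]; exact Finset.mem_image_of_mem τ (hiffa.mpr (h ▸ hxF))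
        · rw [h]; exact Finset.mem_image_of_mem τ (hiffb.mpr (h ▸ hxF))
    · -- Weak positive responsiveness
      intro P hP P' hP' a haF hmv
      obtain ⟨hv, halts, haP, i, hiV, h1, h2, h3, h4⟩ := hmv
      obtain ⟨u, v, huv, hpuv⟩ := Finset.card_eq_two.mp hP.2.2
      obtain ⟨c, hca, hpac⟩ : ∃ c, c ≠ a ∧ P.alts = {a, c} := by
        rcases mem_pair' (hpuv ▸ haP) with h | h
        · refine ⟨v, ?_, ?_⟩
          · rw [h]; exact huv.symm
          · rw [h]; exact hpuv
        · refine ⟨u, ?_, ?_⟩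
          · rw [h]; exact huv
          · rw [h, hpuv]; exact Finset.pair_comm u v
      have hcP : c ∈ P.alts := by rw [hpac]; simp
      have hP'alts : P'.alts = {a, c} := by rw [halts, hpac]
      have hiV' : i ∈ P'.voters := by rw [hv]; exact hiV
      have haP' : a ∈ P'.alts := by rw [halts]; exact haP
      have hcP' : c ∈ P'.alts := by rw [halts]; exact hcP
      have hica : P.rel i c a = true := h1 c hcP hca
      have hiac : P.rel i a c = false := by
        cases hval : P.rel i a c
        · rfl
        · have hcontra := (hP.1 i hiV).1 a haP c hcP hval
          rw [hica] at hcontra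
          simp at hcontra
      have hiac' : P'.rel i a c = true := h2 c hcP hca
      have hica' : P'.rel i c a = false := (hP'.1 i hiV').1 a haP' c hcP' hiac'
      have hMP : 0 ≤ Margin P a c := (H P hP a c hpac).mp haF
      have hM' : Margin P' a c = Margin P a c + 2 := by
        rw [margin_single P P' a c hv i hiV
          (fun j hj hji => ⟨h4 j hj hji a haP c hcP, h4 j hj hji c hcP a haP⟩)]
        have e1 : wgt (P.rel i) a c = -1 := by simp [wgt, hica, hiac]
        have e2 : wgt (P'.rel i) a c = 1 := by simp [wgt, hiac', hica']
        rw [e1, e2]; ring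
      have haF' : a ∈ F P' := (H P' hP' a c hP'alts).mpr (by omega)
      have hcF' : c ∉ F P' := by
        intro hc
        have hle := (H P' hP' c a (hP'alts.trans (Finset.pair_comm a c))).mp hc
        rw [margin_rev] at hle
        omega
      rw [Finset.eq_singleton_iff_unique_mem]
      refine ⟨haF', fun y hy => ?_⟩
      rcases mem_pair' (hP'alts ▸ (hF P' hP').2 hy) with h | h
      · exact h
      · rw [h] at hy
        exact absurd hy hcF'


end MayMinimax
end

section
/- The Minimax voting method, defined on all profiles with at least two alternatives, satisfies positive involvement: if a ∈ Minimax(P) and P' is obtained from P by adding one new voter (a voter not in V(P)) who ranks a uniquely first, then a ∈ Minimax(P'). -/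
/-!
Formalization of notions from "An extension of May's Theorem to three
alternatives: axiomatizing Minimax voting" by Holliday and Pacuit.

The set of voters is the countably infinite set `ℕ`; the set `α` of
alternatives is a type (assumed to have at least three elements where the
paper assumes `|𝒳| ≥ 3`).
-/

namespace MayMinimax

variable {α : Type*} [DecidableEq α]

/-- Minimax, on the domain of all profiles with at least two alternatives,
satisfies positive involvement. -/
theorem minimax_positive_involvement {α : Type*} [DecidableEq α]
    (hX : ∃ x y z : α, x ≠ y ∧ x ≠ z ∧ y ≠ z) :
    PositiveInvolvement (DomGe2 α) Minimax := by
  intro P hP P' hP' a ha hadd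
  obtain ⟨hswo, hvne, hcard⟩ := hP
  obtain ⟨hswo', hvne', hcard'⟩ := hP'
  obtain ⟨halts, j, hjmem, hjv, hjtop, hold⟩ := hadd
  simp only [Minimax, Finset.mem_filter] at ha ⊢
  obtain ⟨haX, hamin⟩ := ha
  have hms : ∀ (Q : Profile α) (x y : α),
      Margin Q x y = (Support Q x y : ℤ) - Support Q y x := fun _ _ _ => rfl
  have hsupp : ∀ x ∈ P.alts, ∀ y ∈ P.alts,
      (Support P' x y : ℤ) =
        (Support P x y : ℤ) + (if P'.rel j x y = true then 1 else 0) := by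
    intro x hx y hy
    have hcongr : P.voters.filter (fun i => P'.rel i x y = true)
        = P.voters.filter (fun i => P.rel i x y = true) := by
      apply Finset.filter_congr
      intro i hi
      simp [hold i hi x hx y hy]
    unfold Support
    rw [hjv, Finset.filter_insert]
    by_cases h : P'.rel j x y = true
    · rw [if_pos h, Finset.card_insert_of_notMem
        (fun hm => hjmem (Finset.mem_of_mem_filter _ hm)), hcongr, if_pos h]
      push_cast; ring
    · rw [if_neg h, hcongr, if_neg h]
      simp
  have hmar : ∀ x ∈ P.alts, ∀ y ∈ P.alts,
      Margin P' x y = Margin P x y +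
        ((if P'.rel j x y = true then 1 else 0) -
          (if P'.rel j y x = true then 1 else 0)) := by
    intro x hx y hy
    rw [hms, hms, hsupp x hx y hy, hsupp y hy x hx]
    ring
  have hmarlow : ∀ x ∈ P.alts, ∀ y ∈ P.alts, Margin P x y - 1 ≤ Margin P' x y := by
    intro x hx y hy
    rw [hmar x hx y hy]
    split_ifs <;> omega
  have hjv' : j ∈ P'.voters := by rw [hjv]; exact Finset.mem_insert_self _ _
  have hmara : ∀ x ∈ P.alts, x ≠ a → Margin P' x a = Margin P x a - 1 := by
    intro x hx hxa
    have htop : P'.rel j a x = true := hjtop x hx hxa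
    have hasym : P'.rel j x a = false := by
      have := (hswo' j hjv').1 a (by rw [halts]; exact haX) x (by rw [halts]; exact hx) htop
      exact this
    rw [hmar x hx a haX, hasym, htop]
    norm_num
    ring
  have key : ∀ (Q : Profile α) (x : α), (Q.alts.erase x).Nonempty →
      (∀ b ∈ Q.alts.erase x, Margin Q b x ≤ MMScore Q x) ∧
      ∃ b ∈ Q.alts.erase x, MMScore Q x = Margin Q b x := by
    intro Q x hne
    have hne' : ((Q.alts.erase x).image fun b => Margin Q b x).Nonempty := hne.image _
    have hmx : MMScore Q x = ((Q.alts.erase x).image fun b => Margin Q b x).max' hne' := by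
      unfold MMScore
      rw [← Finset.coe_max' hne']
      rfl
    constructor
    · intro b hb
      rw [hmx]
      exact Finset.le_max' _ (Margin Q b x)
        (Finset.mem_image_of_mem (fun b => Margin Q b x) hb)
    · have hmem := Finset.max'_mem _ hne'
      rw [Finset.mem_image] at hmem
      obtain ⟨b, hb, hbe⟩ := hmem
      exact ⟨b, hb, by rw [hmx, ← hbe]⟩
  have hntriv : P.alts.Nontrivial := Finset.one_lt_card_iff_nontrivial.mp hcard
  have hnea : ∀ x ∈ P.alts, (P.alts.erase x).Nonempty := by
    intro x hx
    rw [Finset.erase_nonempty hx]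
    exact hntriv
  have hnea' : ∀ x ∈ P.alts, (P'.alts.erase x).Nonempty := by
    intro x hx
    rw [halts]
    exact hnea x hx
  refine ⟨by rw [halts]; exact haX, ?_⟩
  intro b hb
  have hbX : b ∈ P.alts := by rwa [halts] at hb
  -- MMScore P' a ≤ MMScore P a - 1
  have h1 : MMScore P' a ≤ MMScore P a - 1 := by
    obtain ⟨c, hc, hce⟩ := (key P' a (hnea' a haX)).2
    rw [halts] at hc
    have hcne : c ≠ a := Finset.ne_of_mem_erase hc
    have hcX : c ∈ P.alts := Finset.mem_of_mem_erase hc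
    rw [hce, hmara c hcX hcne]
    have := (key P a (hnea a haX)).1 c hc
    omega
  -- MMScore P b - 1 ≤ MMScore P' b
  have h2 : MMScore P b - 1 ≤ MMScore P' b := by
    obtain ⟨c, hc, hce⟩ := (key P b (hnea b hbX)).2
    have hcX : c ∈ P.alts := Finset.mem_of_mem_erase hc
    have hle := (key P' b (hnea' b hbX)).1 c (by rw [halts]; exact hc)
    have := hmarlow c hcX b hbX
    omega
  have := hamin b hbX
  omega

end MayMinimax
end

section
/- The Minimax voting method, defined on all profiles with at least two alternatives, satisfies immunity to spoilers: for any profile P with |X(P)| ≥ 3 and alternatives a,b ∈ X(P), if a ∈ Minimax(P_{-b}), Minimax(P|{a,b}) = {a}, and b ∉ Minimax(P), then a ∈ Minimax(P). -/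
/-!
Formalization of notions from "An extension of May's Theorem to three
alternatives: axiomatizing Minimax voting" by Holliday and Pacuit.

The set of voters is the countably infinite set `ℕ`; the set `α` of
alternatives is a type (assumed to have at least three elements where the
paper assumes `|𝒳| ≥ 3`).
-/

namespace MayMinimax

variable {α : Type*} [DecidableEq α]

lemma margin_restrict (P : Profile α) (Y : Finset α) {x y : α} (hx : x ∈ Y) (hy : y ∈ Y) :
    Margin (P.restrict Y) x y = Margin P x y := by
  unfold Margin Profile.restrict
  simp [hx, hy]

lemma margin_neg (P : Profile α) (x y : α) : Margin P x y = -Margin P y x := by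
  unfold Margin; ring

lemma le_mmscore (P : Profile α) {a c : α} (h : c ∈ P.alts.erase a) :
    Margin P c a ≤ MMScore P a := by
  have hmem : Margin P c a ∈ (P.alts.erase a).image fun b => Margin P b a :=
    Finset.mem_image_of_mem _ h
  obtain ⟨m, hm⟩ := Finset.max_of_mem hmem
  have hle := Finset.le_max hmem
  rw [hm] at hle
  unfold MMScore
  rw [hm]
  exact_mod_cast hle

lemma mmscore_le (P : Profile α) {a : α} {t : ℤ} (hne : (P.alts.erase a).Nonempty)
    (h : ∀ c ∈ P.alts.erase a, Margin P c a ≤ t) : MMScore P a ≤ t := by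
  obtain ⟨c, hc⟩ := hne
  obtain ⟨m, hm⟩ := Finset.max_of_mem (Finset.mem_image_of_mem (fun b => Margin P b a) hc)
  have hmax : ((P.alts.erase a).image fun b => Margin P b a).max ≤ (t : WithBot ℤ) := by
    apply Finset.max_le
    intro x hx
    obtain ⟨d, hd, rfl⟩ := Finset.mem_image.mp hx
    exact_mod_cast h d hd
  unfold MMScore
  rw [hm] at hmax ⊢
  exact_mod_cast hmax

lemma mmscore_pair (P : Profile α) {a b : α} (hab : a ≠ b) :
    MMScore (P.restrict {a, b}) a = Margin P b a := by
  have he : ((P.restrict {a, b}).alts.erase a) = {b} := by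
    show (({a, b} : Finset α).erase a) = {b}
    rw [Finset.erase_insert (by simp [hab])]
  have hra : Margin (P.restrict {a, b}) b a = Margin P b a :=
    margin_restrict P {a, b} (by simp) (by simp)
  unfold MMScore
  rw [he, Finset.image_singleton, Finset.max_singleton, hra]
  rfl

/-- Minimax satisfies immunity to spoilers: if `a` wins without `b`,
`a` beats `b` head-to-head, and `b` loses in the full profile, then `a`
wins in the full profile. -/
theorem minimax_immunity_to_spoilers {α : Type*} [DecidableEq α]
    (hX : ∃ x y z : α, x ≠ y ∧ x ≠ z ∧ y ≠ z) :
    ∀ P : Profile α, IsSWO P → P.voters.Nonempty → 3 ≤ P.alts.card →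
      ∀ a ∈ P.alts, ∀ b ∈ P.alts,
        a ∈ Minimax (P.minus b) →
        Minimax (P.restrict {a, b}) = {a} →
        b ∉ Minimax P → a ∈ Minimax P := by
  intro P _hSWO _hV hcard a ha b hb haMinus hPair hbNot
  have haeb : a ∈ P.alts.erase b := (Finset.mem_filter.mp haMinus).1
  have hneab : a ≠ b := (Finset.mem_erase.mp haeb).1
  have hS : ∀ c ∈ P.alts.erase b, MMScore (P.minus b) a ≤ MMScore (P.minus b) c :=
    (Finset.mem_filter.mp haMinus).2
  -- `a` beats `b` head to head
  have hba : Margin P b a < 0 := by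
    have hbQ : b ∉ Minimax (P.restrict {a, b}) := by
      rw [hPair]; simp [Ne.symm hneab]
    have hbalts : b ∈ (P.restrict {a, b}).alts := by
      show b ∈ ({a, b} : Finset α); simp
    have hnot : ¬ ∀ c ∈ (P.restrict {a, b}).alts,
        MMScore (P.restrict {a, b}) b ≤ MMScore (P.restrict {a, b}) c := by
      intro h
      exact hbQ (Finset.mem_filter.mpr ⟨hbalts, h⟩)
    push_neg at hnot
    obtain ⟨c, hc, hlt⟩ := hnot
    have hc' : c = a ∨ c = b := by
      have : c ∈ ({a, b} : Finset α) := hc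
      simpa using this
    have hca : c = a := by
      rcases hc' with h | h
      · exact h
      · subst h; exact absurd le_rfl (not_le.mpr hlt)
    subst hca
    have h1 : MMScore (P.restrict {c, b}) c = Margin P b c := mmscore_pair P hneab
    have h2 : MMScore (P.restrict {c, b}) b = Margin P c b := by
      have : ({c, b} : Finset α) = {b, c} := Finset.pair_comm c b
      rw [this]
      exact mmscore_pair P (Ne.symm hneab)
    rw [h1, h2] at hlt
    have := margin_neg P c b
    linarith
  -- scores in `P.minus b` bound scores in `P`
  have hminusalts : (P.minus b).alts = P.alts.erase b := rfl
  have hcard2 : 2 ≤ (P.alts.erase b).card := by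
    rw [Finset.card_erase_of_mem hb]; omega
  have hA : ∀ c ∈ P.alts.erase b, MMScore (P.minus b) c ≤ MMScore P c := by
    intro c hc
    apply mmscore_le (P.minus b)
    · rw [hminusalts]
      have : 1 ≤ ((P.alts.erase b).erase c).card := by
        rw [Finset.card_erase_of_mem hc]; omega
      exact Finset.card_pos.mp (by omega)
    · intro d hd
      rw [hminusalts] at hd
      have hdc : d ≠ c := (Finset.mem_erase.mp hd).1
      have hdeb : d ∈ P.alts.erase b := (Finset.mem_erase.mp hd).2
      have hdalts : d ∈ P.alts := (Finset.mem_erase.mp hdeb).2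
      have hcalts : c ∈ P.alts := (Finset.mem_erase.mp hc).2
      have : Margin (P.minus b) d c = Margin P d c :=
        margin_restrict P (P.alts.erase b) hdeb hc
      rw [this]
      exact le_mmscore P (Finset.mem_erase.mpr ⟨hdc, hdalts⟩)
  -- `MMScore P a ≤ max (MMScore (P.minus b) a) (Margin P b a)`
  have hB : MMScore P a ≤ max (MMScore (P.minus b) a) (Margin P b a) := by
    have hneA : (P.alts.erase a).Nonempty := ⟨b, Finset.mem_erase.mpr ⟨Ne.symm hneab, hb⟩⟩
    apply mmscore_le P hneA
    intro d hd
    by_cases hdb : d = b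
    · subst hdb; exact le_max_right _ _
    · have hda : d ≠ a := (Finset.mem_erase.mp hd).1
      have hdalts : d ∈ P.alts := (Finset.mem_erase.mp hd).2
      have hdeb : d ∈ P.alts.erase b := Finset.mem_erase.mpr ⟨hdb, hdalts⟩
      have heq : Margin P d a = Margin (P.minus b) d a :=
        (margin_restrict P (P.alts.erase b) hdeb haeb).symm
      rw [heq]
      exact le_trans (le_mmscore (P.minus b)
        (Finset.mem_erase.mpr ⟨hda, by rw [hminusalts]; exact hdeb⟩)) (le_max_left _ _)
  -- witness for `b`'s loss
  have hnotB : ¬ ∀ c ∈ P.alts, MMScore P b ≤ MMScore P c := by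
    intro h
    exact hbNot (Finset.mem_filter.mpr ⟨hb, h⟩)
  push_neg at hnotB
  obtain ⟨d, hd, hdlt⟩ := hnotB
  -- pair inequality
  have hCpair : ∀ c ∈ P.alts, c ≠ a → 0 ≤ MMScore P a + MMScore P c := by
    intro c hc hca
    have h1 : Margin P c a ≤ MMScore P a := le_mmscore P (Finset.mem_erase.mpr ⟨hca, hc⟩)
    have h2 : Margin P a c ≤ MMScore P c :=
      le_mmscore P (Finset.mem_erase.mpr ⟨Ne.symm hca, ha⟩)
    have := margin_neg P a c
    linarith
  apply Finset.mem_filter.mpr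
  refine ⟨ha, fun c hc => ?_⟩
  by_cases hca : c = a
  · subst hca; exact le_rfl
  by_cases hneg : MMScore P a < 0
  · have := hCpair c hc hca
    linarith
  · push_neg at hneg
    have hSa : MMScore P a ≤ MMScore (P.minus b) a := by
      rcases le_max_iff.mp hB with h | h
      · exact h
      · linarith
    by_cases hcb : c = b
    · subst hcb
      have hdb : d ≠ c := by rintro rfl; exact absurd le_rfl (not_le.mpr hdlt)
      by_cases hda : d = a
      · subst hda; linarith
      · have hdeb : d ∈ P.alts.erase c := Finset.mem_erase.mpr ⟨hdb, hd⟩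
        have := hS d hdeb
        have := hA d hdeb
        linarith
    · have hceb : c ∈ P.alts.erase b := Finset.mem_erase.mpr ⟨hcb, hc⟩
      have := hS c hceb
      have := hA c hceb
      linarith

end MayMinimax
end

section
/- Let F be a voting method whose domain is the set of all profiles with two or three alternatives. If F satisfies neutrality, weak positive responsiveness, homogeneity, and block preservation, then F agrees with majority voting in any two-alternative profile with a unique majority winner: for any profile P with X(P) = {a,b} such that strictly more voters rank a above b than rank b above a, F(P) = {a}. -/
/-!
Formalization of notions from "An extension of May's Theorem to three
alternatives: axiomatizing Minimax voting" by Holliday and Pacuit.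

The set of voters is the countably infinite set `ℕ`; the set `α` of
alternatives is a type (assumed to have at least three elements where the
paper assumes `|𝒳| ≥ 3`).
-/

namespace MayMinimax

variable {α : Type*} [DecidableEq α]

/-! ### Auxiliary material for `majority_without_anonymity` -/

section MajorityAux

lemma profile_ext' {P Q : Profile α} (h1 : P.voters = Q.voters) (h2 : P.alts = Q.alts)
    (h3 : P.rel = Q.rel) : P = Q := by
  cases P; cases Q; simp_all

lemma mem_pair_iff' {a b x : α} : x ∈ ({a, b} : Finset α) ↔ x = a ∨ x = b := by simp

lemma swo_irrefl {P : Profile α} (h : IsSWO P) {i : ℕ} (hi : i ∈ P.voters) {x : α}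
    (hx : x ∈ P.alts) : P.rel i x x = false := by
  cases hxx : P.rel i x x
  · rfl
  · exact absurd ((h i hi).1 x hx x hx hxx) (by simp [hxx])

lemma swo_asym {P : Profile α} (h : IsSWO P) {i : ℕ} (hi : i ∈ P.voters) {x y : α}
    (hx : x ∈ P.alts) (hy : y ∈ P.alts) (hxy : P.rel i x y = true) : P.rel i y x = false :=
  (h i hi).1 x hx y hy hxy

lemma isSWO_pair {P : Profile α} {a b : α} (halts : P.alts = {a, b})
    (h : ∀ i ∈ P.voters, P.rel i a a = false ∧ P.rel i b b = false ∧
      ¬(P.rel i a b = true ∧ P.rel i b a = true)) : IsSWO P := by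
  intro i hi
  obtain ⟨h1, h2, h3⟩ := h i hi
  rw [halts]
  constructor
  · intro x hx y hy hxy
    rcases mem_pair_iff'.1 hx with rfl | rfl <;> rcases mem_pair_iff'.1 hy with rfl | rfl
    · simp_all
    · cases hba : P.rel i y x
      · rfl
      · exact absurd ⟨hxy, hba⟩ h3
    · cases hba : P.rel i y x
      · rfl
      · exact absurd ⟨hba, hxy⟩ h3
    · simp_all
  · intro x hx y hy z hz hxy hyz
    rcases mem_pair_iff'.1 hx with rfl | rfl <;> rcases mem_pair_iff'.1 hy with rfl | rfl <;>
      rcases mem_pair_iff'.1 hz with rfl | rfl <;>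
      first | exact h1 | exact h2 | exact hxy | exact hyz

/-- `IsLinearOn` for a strict two-alternative ballot with `a` above `b`. -/
lemma isLinearOn_pair {P : Profile α} {a b : α} (hswo : IsSWO P) (halts : P.alts = {a, b})
    {i : ℕ} (hi : i ∈ P.voters) (h : P.rel i a b = true) : IsLinearOn (P.rel i) P.alts := by
  have ha : a ∈ P.alts := by rw [halts]; exact Finset.mem_insert_self a {b}
  have hb : b ∈ P.alts := by rw [halts]; simp
  have hba : P.rel i b a = false := swo_asym hswo hi ha hb h
  have hirra : P.rel i a a = false := swo_irrefl hswo hi ha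
  have hirrb : P.rel i b b = false := swo_irrefl hswo hi hb
  refine ⟨fun x hx => ?_, fun x hx y hy z hz hxy hyz => ?_, fun x hx y hy hxy => ?_,
    fun x hx y hy hxy => ?_⟩
  · rw [halts] at hx
    rcases mem_pair_iff'.1 hx with rfl | rfl
    · exact hirra
    · exact hirrb
  · rw [halts] at hx hy hz
    rcases mem_pair_iff'.1 hx with rfl | rfl <;> rcases mem_pair_iff'.1 hy with rfl | rfl <;>
      rcases mem_pair_iff'.1 hz with rfl | rfl <;> simp_all
  · rw [halts] at hx hy
    rcases mem_pair_iff'.1 hx with rfl | rfl <;> rcases mem_pair_iff'.1 hy with rfl | rfl <;>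
      simp_all
  · rw [halts] at hx hy
    rcases mem_pair_iff'.1 hx with rfl | rfl <;> rcases mem_pair_iff'.1 hy with rfl | rfl <;>
      simp_all

/-- Flip the `(a, b)` ballots of all voters in `S` from `a` above `b` to `b` above `a`. -/
def flipSet (R : Profile α) (a b : α) (S : Finset ℕ) : Profile α :=
  ⟨R.voters, R.alts, fun i x y =>
    if i ∈ S then
      (if x = a ∧ y = b then false else if x = b ∧ y = a then true else R.rel i x y)
    else R.rel i x y⟩

section FlipFacts

variable {R : Profile α} {a b : α} {S : Finset ℕ}

lemma flipSet_voters : (flipSet R a b S).voters = R.voters := rfl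

lemma flipSet_alts : (flipSet R a b S).alts = R.alts := rfl

lemma flipSet_rel_not_mem {i : ℕ} (hi : i ∉ S) (x y : α) :
    (flipSet R a b S).rel i x y = R.rel i x y := by simp [flipSet, hi]

lemma flipSet_rel_ab {i : ℕ} (hi : i ∈ S) : (flipSet R a b S).rel i a b = false := by
  simp [flipSet, hi]

lemma flipSet_rel_ba (hab : a ≠ b) {i : ℕ} (hi : i ∈ S) :
    (flipSet R a b S).rel i b a = true := by
  simp [flipSet, hi, hab, Ne.symm hab]

lemma flipSet_rel_aa (hab : a ≠ b) {i : ℕ} : (flipSet R a b S).rel i a a = R.rel i a a := by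
  by_cases hi : i ∈ S <;> simp [flipSet, hi, hab, Ne.symm hab]

lemma flipSet_rel_bb (hab : a ≠ b) {i : ℕ} : (flipSet R a b S).rel i b b = R.rel i b b := by
  by_cases hi : i ∈ S <;> simp [flipSet, hi, hab, Ne.symm hab]

lemma flipSet_mem_dom23 (hR : R ∈ Dom23 α) (halts : R.alts = {a, b}) (hab : a ≠ b)
    (S : Finset ℕ) : flipSet R a b S ∈ Dom23 α := by
  obtain ⟨hswo, hne, hcard⟩ := hR
  have ha : a ∈ R.alts := by rw [halts]; exact Finset.mem_insert_self a {b}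
  have hb : b ∈ R.alts := by rw [halts]; simp
  refine ⟨isSWO_pair (by rw [flipSet_alts, halts]) fun i hi => ?_, hne, hcard⟩
  have hi' : i ∈ R.voters := hi
  refine ⟨by rw [flipSet_rel_aa hab]; exact swo_irrefl hswo hi' ha,
    by rw [flipSet_rel_bb hab]; exact swo_irrefl hswo hi' hb, ?_⟩
  by_cases hiS : i ∈ S
  · rw [flipSet_rel_ab hiS]; simp
  · rw [flipSet_rel_not_mem hiS, flipSet_rel_not_mem hiS]
    rintro ⟨h1, h2⟩
    have := swo_asym hswo hi' ha hb h1
    rw [this] at h2; exact absurd h2 (by simp)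

lemma flipSet_empty (R : Profile α) (a b : α) : flipSet R a b ∅ = R := by
  refine profile_ext' rfl rfl ?_
  funext i x y
  simp [flipSet]

end FlipFacts

/-- Unanimity-type lemma: if no voter ranks `b` above `a` and some voter ranks `a`
above `b`, then `F` selects exactly `a`. -/
lemma unanimous_wins (F : Profile α → Finset α)
    (hF : ∀ P ∈ Dom23 α, (F P).Nonempty ∧ F P ⊆ P.alts)
    (neut : Neutrality (Dom23 α) F)
    (wpr : WeakPositiveResponsiveness (Dom23 α) F)
    {R : Profile α} {a b : α}
    (hR : R ∈ Dom23 α) (halts : R.alts = {a, b}) (hab : a ≠ b)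
    (hb0 : ∀ i ∈ R.voters, R.rel i b a = false)
    (ha1 : ∃ i ∈ R.voters, R.rel i a b = true) :
    F R = {a} := by
  obtain ⟨hswo, hvne, hcard⟩ := hR
  have hR' : R ∈ Dom23 α := ⟨hswo, hvne, hcard⟩
  have ha : a ∈ R.alts := by rw [halts]; exact Finset.mem_insert_self a {b}
  have hb : b ∈ R.alts := by rw [halts]; simp
  by_cases hbF : b ∈ F R
  · -- descend: flip all `a > b` voters one by one, keeping `b` chosen
    set A : Finset ℕ := R.voters.filter (fun i => R.rel i a b = true) with hA
    have hmlf : ∀ S : Finset ℕ, ∀ v ∈ A, v ∉ S →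
        MoveLastToFirst (flipSet R a b S) (flipSet R a b (insert v S)) b := by
      intro S v hvA hvS
      have hvV : v ∈ R.voters := (Finset.mem_filter.1 hvA).1
      have hvab : R.rel v a b = true := (Finset.mem_filter.1 hvA).2
      refine ⟨rfl, rfl, hb, v, hvV, ?_, ?_, ?_, ?_⟩
      · intro c hc hcb
        rcases mem_pair_iff'.1 (halts ▸ hc) with rfl | rfl
        · rw [flipSet_rel_not_mem hvS]; exact hvab
        · exact absurd rfl hcb
      · intro c hc hcb
        rcases mem_pair_iff'.1 (halts ▸ hc) with rfl | rfl
        · exact flipSet_rel_ba hab (Finset.mem_insert_self v S)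
        · exact absurd rfl hcb
      · intro c hc hcb d hd hdb
        rcases mem_pair_iff'.1 (halts ▸ hc) with rfl | rfl
        · rcases mem_pair_iff'.1 (halts ▸ hd) with rfl | rfl
          · rw [flipSet_rel_aa hab, flipSet_rel_aa hab]
          · exact absurd rfl hdb
        · exact absurd rfl hcb
      · intro j hj hjv x hx y hy
        by_cases hjS : j ∈ S <;>
          simp [flipSet, Finset.mem_insert, hjv, hjS]
    have hclaim : ∀ S : Finset ℕ, S ⊆ A → b ∈ F (flipSet R a b S) := by
      intro S
      induction S using Finset.induction_on with
      | empty => intro _; rw [flipSet_empty]; exact hbF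
      | insert _ _ hvS =>
        rename_i v S ih
        intro hins
        have hvA : v ∈ A := hins (Finset.mem_insert_self v S)
        have hSA : S ⊆ A := fun x hx => hins (Finset.mem_insert_of_mem hx)
        have hstep := wpr (flipSet R a b S) (flipSet_mem_dom23 hR' halts hab S)
          (flipSet R a b (insert v S)) (flipSet_mem_dom23 hR' halts hab _)
          b (ih hSA) (hmlf S v hvA hvS)
        rw [hstep]; simp
    have hAne : A.Nonempty := by
      obtain ⟨i, hi, hab'⟩ := ha1
      exact ⟨i, Finset.mem_filter.2 ⟨hi, hab'⟩⟩
    obtain ⟨v0, hv0⟩ := hAne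
    have hfinal : F (flipSet R a b A) = {b} := by
      have h1 : b ∈ F (flipSet R a b (A.erase v0)) :=
        hclaim (A.erase v0) (Finset.erase_subset _ _)
      have h2 := wpr (flipSet R a b (A.erase v0)) (flipSet_mem_dom23 hR' halts hab _)
        (flipSet R a b (insert v0 (A.erase v0))) (flipSet_mem_dom23 hR' halts hab _)
        b h1 (hmlf (A.erase v0) v0 hv0 (Finset.notMem_erase v0 A))
      rwa [Finset.insert_erase hv0] at h2
    -- now apply neutrality with the swap of `a` and `b`
    have himg := neut (flipSet R a b A) (flipSet_mem_dom23 hR' halts hab A) R hR' rfl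
      (Equiv.swap a b) ?_ ?_
    · rw [hfinal] at himg
      rw [← himg, Finset.image_singleton, Equiv.swap_apply_right]
    · rw [flipSet_alts, halts, Finset.image_insert, Finset.image_singleton,
        Equiv.swap_apply_left, Equiv.swap_apply_right]
      exact Finset.pair_comm b a
    · intro i hi x hx y hy
      have hiV : i ∈ R.voters := hi
      have hx' := mem_pair_iff'.1 (halts ▸ hx)
      have hy' := mem_pair_iff'.1 (halts ▸ hy)
      by_cases hiA : i ∈ A
      · have hiab : R.rel i a b = true := (Finset.mem_filter.1 hiA).2
        have hiba : R.rel i b a = false := hb0 i hiV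
        rcases hx' with rfl | rfl <;> rcases hy' with rfl | rfl
        · rw [flipSet_rel_aa hab, Equiv.swap_apply_left, swo_irrefl hswo hiV ha,
            swo_irrefl hswo hiV hb]
        · rw [flipSet_rel_ab hiA, Equiv.swap_apply_left, Equiv.swap_apply_right, hiba]
        · rw [flipSet_rel_ba hab hiA, Equiv.swap_apply_left, Equiv.swap_apply_right, hiab]
        · rw [flipSet_rel_bb hab, Equiv.swap_apply_right, swo_irrefl hswo hiV ha,
            swo_irrefl hswo hiV hb]
      · have hiab : R.rel i a b = false := by
          cases h' : R.rel i a b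
          · rfl
          · exact absurd (Finset.mem_filter.2 ⟨hiV, h'⟩) hiA
        have hiba : R.rel i b a = false := hb0 i hiV
        rcases hx' with rfl | rfl <;> rcases hy' with rfl | rfl
        · rw [flipSet_rel_not_mem hiA, Equiv.swap_apply_left, swo_irrefl hswo hiV ha,
            swo_irrefl hswo hiV hb]
        · rw [flipSet_rel_not_mem hiA, Equiv.swap_apply_left, Equiv.swap_apply_right,
            hiab, hiba]
        · rw [flipSet_rel_not_mem hiA, Equiv.swap_apply_left, Equiv.swap_apply_right,
            hiab, hiba]
        · rw [flipSet_rel_not_mem hiA, Equiv.swap_apply_right, swo_irrefl hswo hiV ha,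
            swo_irrefl hswo hiV hb]
  · -- `b` is not chosen, so `F R = {a}` by nonemptiness
    obtain ⟨hne, hsub⟩ := hF R hR'
    have : F R ⊆ {a} := by
      intro x hx
      rcases mem_pair_iff'.1 (halts ▸ hsub hx) with rfl | rfl
      · simp
      · exact absurd hx hbF
    exact (Finset.Nonempty.subset_singleton_iff hne).1 this

/-- If strictly more voters rank `a` above `b` than `b` above `a`, then `a` is chosen. -/
lemma mem_of_majority (F : Profile α → Finset α)
    (hF : ∀ P ∈ Dom23 α, (F P).Nonempty ∧ F P ⊆ P.alts)
    (neut : Neutrality (Dom23 α) F)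
    (wpr : WeakPositiveResponsiveness (Dom23 α) F)
    (bp : BlockPreservation (Dom23 α) F) :
    ∀ n : ℕ, ∀ R : Profile α, ∀ a b : α, R ∈ Dom23 α → R.alts = {a, b} → a ≠ b →
      Support R b a = n → n < Support R a b → a ∈ F R := by
  intro n
  induction n with
  | zero =>
    intro R a b hR halts hab hSb hSa
    have hb0 : ∀ i ∈ R.voters, R.rel i b a = false := by
      intro i hi
      have : R.voters.filter (fun i => R.rel i b a = true) = ∅ :=
        Finset.card_eq_zero.1 hSb
      cases h' : R.rel i b a
      · rfl
      · exact absurd (Finset.mem_filter.2 ⟨hi, h'⟩)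
          (by rw [this]; exact Finset.notMem_empty i)
    have ha1 : ∃ i ∈ R.voters, R.rel i a b = true := by
      have : (R.voters.filter (fun i => R.rel i a b = true)).Nonempty :=
        Finset.card_pos.1 hSa
      obtain ⟨i, hi⟩ := this
      exact ⟨i, (Finset.mem_filter.1 hi).1, (Finset.mem_filter.1 hi).2⟩
    rw [unanimous_wins F hF neut wpr hR halts hab hb0 ha1]
    simp
  | succ n ih =>
    intro R a b hR halts hab hSb hSa
    obtain ⟨hswo, hvne, hcard⟩ := hR
    have hR' : R ∈ Dom23 α := ⟨hswo, hvne, hcard⟩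
    have ha : a ∈ R.alts := by rw [halts]; exact Finset.mem_insert_self a {b}
    have hb : b ∈ R.alts := by rw [halts]; simp
    set Bf : Finset ℕ := R.voters.filter (fun i => R.rel i b a = true) with hBf
    set Af : Finset ℕ := R.voters.filter (fun i => R.rel i a b = true) with hAf
    have hBfc : Bf.card = n + 1 := hSb
    have hwB : Bf.Nonempty := Finset.card_pos.1 (by omega)
    obtain ⟨w, hwBf⟩ := hwB
    have hwV : w ∈ R.voters := (Finset.mem_filter.1 hwBf).1
    have hwba : R.rel w b a = true := (Finset.mem_filter.1 hwBf).2
    have hwab : R.rel w a b = false := swo_asym hswo hwV hb ha hwba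
    have hAcard : n + 2 ≤ Af.card := hSa
    have hxA : Af.Nonempty := Finset.card_pos.1 (by omega)
    obtain ⟨x, hxAf⟩ := hxA
    have hxV : x ∈ R.voters := (Finset.mem_filter.1 hxAf).1
    have hxab : R.rel x a b = true := (Finset.mem_filter.1 hxAf).2
    have hxba : R.rel x b a = false := swo_asym hswo hxV ha hb hxab
    have hxw : x ≠ w := by rintro rfl; rw [hxab] at hwab; exact absurd hwab (by simp)
    -- another `a > b` voter, to keep the smaller profile nonempty
    have hx'ne : (Af.erase x).Nonempty := by
      rw [← Finset.card_pos, Finset.card_erase_of_mem hxAf]; omega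
    obtain ⟨x', hx'⟩ := hx'ne
    have hx'x : x' ≠ x := (Finset.mem_erase.1 hx').1
    have hx'V : x' ∈ R.voters := (Finset.mem_filter.1 (Finset.mem_erase.1 hx').2).1
    have hx'ab : R.rel x' a b = true := (Finset.mem_filter.1 (Finset.mem_erase.1 hx').2).2
    have hx'w : x' ≠ w := by rintro rfl; rw [hx'ab] at hwab; exact absurd hwab (by simp)
    -- the smaller profile
    set R' : Profile α := ⟨(R.voters.erase x).erase w, R.alts, R.rel⟩ with hR'def
    have hR'dom : R' ∈ Dom23 α := by
      refine ⟨?_, ⟨x', Finset.mem_erase.2 ⟨hx'w, Finset.mem_erase.2 ⟨hx'x, hx'V⟩⟩⟩, hcard⟩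
      intro i hi
      exact hswo i (Finset.mem_of_mem_erase (Finset.mem_of_mem_erase hi))
    have hfiltb : R'.voters.filter (fun i => R.rel i b a = true) = Bf.erase w := by
      ext i
      simp only [hR'def, hBf, Finset.mem_filter, Finset.mem_erase]
      constructor
      · rintro ⟨⟨hiw, hix, hiV⟩, h⟩; exact ⟨hiw, ⟨hiV, h⟩⟩
      · rintro ⟨hiw, hiV, h⟩
        refine ⟨⟨hiw, ?_, hiV⟩, h⟩
        rintro rfl; rw [h] at hxba; exact absurd hxba (by simp)
    have hfilta : R'.voters.filter (fun i => R.rel i a b = true) = Af.erase x := by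
      ext i
      simp only [hR'def, hAf, Finset.mem_filter, Finset.mem_erase]
      constructor
      · rintro ⟨⟨hiw, hix, hiV⟩, h⟩; exact ⟨hix, ⟨hiV, h⟩⟩
      · rintro ⟨hix, hiV, h⟩
        refine ⟨⟨?_, hix, hiV⟩, h⟩
        rintro rfl; rw [h] at hwab; exact absurd hwab (by simp)
    have hSb' : Support R' b a = n := by
      show (R'.voters.filter (fun i => R.rel i b a = true)).card = n
      rw [hfiltb, Finset.card_erase_of_mem hwBf]
      omega
    have hSa' : n < Support R' a b := by
      show n < (R'.voters.filter (fun i => R.rel i a b = true)).card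
      rw [hfilta, Finset.card_erase_of_mem hxAf]
      omega
    have haR' : a ∈ F R' := ih R' a b hR'dom halts hab hSb' hSa'
    -- the block on voters `x` and `w`
    set Q : Profile α := ⟨{x, w}, R.alts, R.rel⟩ with hQdef
    have hQdom : Q ∈ Dom23 α := by
      refine ⟨isSWO_pair halts fun i hi => ?_, ⟨x, Finset.mem_insert_self x {w}⟩, hcard⟩
      have hiV : i ∈ R.voters := by
        rcases mem_pair_iff'.1 hi with rfl | rfl
        · exact hxV
        · exact hwV
      refine ⟨swo_irrefl hswo hiV ha, swo_irrefl hswo hiV hb, ?_⟩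
      rintro ⟨h1, h2⟩
      have := swo_asym hswo hiV ha hb h1
      rw [this] at h2; exact absurd h2 (by simp)
    have hdisj : Disjoint R'.voters Q.voters := by
      rw [Finset.disjoint_left]
      intro i hi
      have h1 : i ≠ w := (Finset.mem_erase.1 hi).1
      have h2 : i ≠ x := (Finset.mem_erase.1 (Finset.mem_erase.1 hi).2).1
      simp [hQdef, h1, h2]
    have hblock : IsBlock R'.alts Q := by
      refine ⟨rfl, ?_, ?_⟩
      · intro i hi
        rcases mem_pair_iff'.1 hi with rfl | rfl
        · exact isLinearOn_pair hswo halts hxV hxab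
        · have : IsLinearOn (R.rel i) R.alts := by
            have hba : R.alts = {b, a} := by rw [halts, Finset.pair_comm]
            exact isLinearOn_pair hswo hba hwV hwba
          exact this
      · intro r hr
        obtain ⟨hirr, htr, htot, hasym⟩ := hr
        have hra : a ∈ R'.alts := ha
        have hrb : b ∈ R'.alts := hb
        have hraa : r a a = false := hirr a hra
        have hrbb : r b b = false := hirr b hrb
        rcases htot a hra b hrb hab with hrab | hrba
        · refine ⟨x, ⟨by simp [hQdef], ?_⟩, ?_⟩
          · intro u hu v hv
            rcases mem_pair_iff'.1 (halts ▸ hu) with rfl | rfl <;>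
              rcases mem_pair_iff'.1 (halts ▸ hv) with rfl | rfl
            · rw [swo_irrefl hswo hxV ha, hraa]
            · rw [hxab, hrab]
            · rw [hxba, hasym _ hra _ hrb hrab]
            · rw [swo_irrefl hswo hxV hb, hrbb]
          · rintro y ⟨hy, hmatch⟩
            rcases mem_pair_iff'.1 hy with rfl | rfl
            · rfl
            · exfalso
              have := hmatch _ hb _ ha
              rw [hwba, hasym _ hra _ hrb hrab] at this
              exact absurd this (by simp)
        · refine ⟨w, ⟨by simp [hQdef], ?_⟩, ?_⟩
          · intro u hu v hv
            rcases mem_pair_iff'.1 (halts ▸ hu) with rfl | rfl <;>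
              rcases mem_pair_iff'.1 (halts ▸ hv) with rfl | rfl
            · rw [swo_irrefl hswo hwV ha, hraa]
            · rw [hwab, hasym _ hrb _ hra hrba]
            · rw [hwba, hrba]
            · rw [swo_irrefl hswo hwV hb, hrbb]
          · rintro y ⟨hy, hmatch⟩
            rcases mem_pair_iff'.1 hy with rfl | rfl
            · exfalso
              have := hmatch _ ha _ hb
              rw [hxab, hasym _ hrb _ hra hrba] at this
              exact absurd this (by simp)
            · rfl
    obtain ⟨hcdom, hsub⟩ := bp R' hR'dom Q hQdom hdisj hblock
    have hcomb : R'.combine Q = R := by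
      refine profile_ext' ?_ rfl ?_
      · show ((R.voters.erase x).erase w) ∪ {x, w} = R.voters
        ext i
        simp only [Finset.mem_union, Finset.mem_erase, Finset.mem_insert,
          Finset.mem_singleton]
        constructor
        · rintro (⟨_, _, h⟩ | rfl | rfl)
          · exact h
          · exact hxV
          · exact hwV
        · intro hiV
          by_cases h1 : i = x
          · exact Or.inr (Or.inl h1)
          · by_cases h2 : i = w
            · exact Or.inr (Or.inr h2)
            · exact Or.inl ⟨h2, h1, hiV⟩
      · funext i u v
        show (if i ∈ R'.voters then R.rel i u v else R.rel i u v) = R.rel i u v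
        exact ite_self _
    rw [hcomb] at hsub
    exact hsub haR'

/-- If `a` beats `b` by a margin of at least 3, then `F` selects exactly `a`. -/
lemma singleton_of_margin_ge3 (F : Profile α → Finset α)
    (hF : ∀ P ∈ Dom23 α, (F P).Nonempty ∧ F P ⊆ P.alts)
    (neut : Neutrality (Dom23 α) F)
    (wpr : WeakPositiveResponsiveness (Dom23 α) F)
    (bp : BlockPreservation (Dom23 α) F)
    {R : Profile α} {a b : α}
    (hR : R ∈ Dom23 α) (halts : R.alts = {a, b}) (hab : a ≠ b)
    (h3 : Support R b a + 3 ≤ Support R a b) :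
    F R = {a} := by
  obtain ⟨hswo, hvne, hcard⟩ := hR
  have hR' : R ∈ Dom23 α := ⟨hswo, hvne, hcard⟩
  have ha : a ∈ R.alts := by rw [halts]; exact Finset.mem_insert_self a {b}
  have hb : b ∈ R.alts := by rw [halts]; simp
  set Af : Finset ℕ := R.voters.filter (fun i => R.rel i a b = true) with hAf
  have hxA : Af.Nonempty := by
    rw [← Finset.card_pos]
    have : Support R a b = Af.card := rfl
    omega
  obtain ⟨x, hxAf⟩ := hxA
  have hxV : x ∈ R.voters := (Finset.mem_filter.1 hxAf).1
  have hxab : R.rel x a b = true := (Finset.mem_filter.1 hxAf).2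
  have hxba : R.rel x b a = false := swo_asym hswo hxV ha hb hxab
  set Rm : Profile α := flipSet R a b {x} with hRm
  have hRmdom : Rm ∈ Dom23 α := flipSet_mem_dom23 hR' halts hab {x}
  have hSa' : Support Rm a b = Support R a b - 1 := by
    show (Rm.voters.filter (fun i => Rm.rel i a b = true)).card = _
    have : Rm.voters.filter (fun i => Rm.rel i a b = true) = Af.erase x := by
      ext i
      simp only [Finset.mem_filter, Finset.mem_erase, hAf]
      constructor
      · rintro ⟨hiV, h⟩
        have hix : i ≠ x := by
          rintro rfl
          rw [flipSet_rel_ab (Finset.mem_singleton_self _)] at h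
          exact absurd h (by simp)
        rw [flipSet_rel_not_mem (by simp [hix])] at h
        exact ⟨hix, hiV, h⟩
      · rintro ⟨hix, hiV, h⟩
        refine ⟨hiV, ?_⟩
        rwa [flipSet_rel_not_mem (by simp [hix])]
    rw [this, Finset.card_erase_of_mem hxAf]
    rfl
  have hSb' : Support Rm b a = Support R b a + 1 := by
    show (Rm.voters.filter (fun i => Rm.rel i b a = true)).card = _
    have : Rm.voters.filter (fun i => Rm.rel i b a = true) =
        insert x (R.voters.filter (fun i => R.rel i b a = true)) := by
      ext i
      simp only [Finset.mem_filter, Finset.mem_insert]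
      constructor
      · rintro ⟨hiV, h⟩
        by_cases hix : i = x
        · exact Or.inl hix
        · rw [flipSet_rel_not_mem (by simp [hix])] at h
          exact Or.inr ⟨hiV, h⟩
      · rintro (rfl | ⟨hiV, h⟩)
        · exact ⟨hxV, flipSet_rel_ba hab (Finset.mem_singleton_self _)⟩
        · refine ⟨hiV, ?_⟩
          by_cases hix : i = x
          · subst hix; rw [h] at hxba; exact absurd hxba (by simp)
          · rwa [flipSet_rel_not_mem (by simp [hix])]
    rw [this, Finset.card_insert_of_notMem ?_]
    · rfl
    intro hmem
    rw [(Finset.mem_filter.1 hmem).2] at hxba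
    exact absurd hxba (by simp)
  have haRm : a ∈ F Rm := by
    refine mem_of_majority F hF neut wpr bp (Support R b a + 1) Rm a b hRmdom
      (by rw [hRm, flipSet_alts, halts]) hab hSb' ?_
    omega
  have hmlf : MoveLastToFirst Rm R a := by
    refine ⟨rfl, rfl, (by rw [hRm, flipSet_alts]; exact ha), x, hxV, ?_, ?_, ?_, ?_⟩
    · intro c hc hca
      rcases mem_pair_iff'.1 (halts ▸ hc) with rfl | rfl
      · exact absurd rfl hca
      · exact flipSet_rel_ba hab (Finset.mem_singleton_self x)
    · intro c hc hca
      rcases mem_pair_iff'.1 (halts ▸ hc) with rfl | rfl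
      · exact absurd rfl hca
      · exact hxab
    · intro c hc hca d hd hda
      rcases mem_pair_iff'.1 (halts ▸ hc) with rfl | rfl
      · exact absurd rfl hca
      · rcases mem_pair_iff'.1 (halts ▸ hd) with rfl | rfl
        · exact absurd rfl hda
        · rw [hRm, flipSet_rel_bb hab]
    · intro j hj hjx u hu v hv
      rw [hRm, flipSet_rel_not_mem (by simp [hjx])]
  exact wpr Rm hRmdom R hR' a haRm hmlf

/-- Doubling a profile doubles every support count. -/
lemma support_double (P : Profile α) (a b : α) :
    Support P.double a b = 2 * Support P a b := by
  classical
  set K : ℕ := P.voters.sup id + 1 with hK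
  have hshift : ∀ i ∈ P.voters, i + K ∉ P.voters := by
    intro i _ hmem
    have := Finset.le_sup (f := id) hmem
    simp only [id] at this
    omega
  have hdisj : Disjoint P.voters (P.voters.image fun i => i + K) := by
    rw [Finset.disjoint_right]
    intro i hi hmem
    obtain ⟨j, hj, rfl⟩ := Finset.mem_image.1 hi
    exact hshift j hj hmem
  show ((P.voters ∪ P.voters.image fun i => i + K).filter
      (fun i => P.double.rel i a b = true)).card = _
  rw [Finset.filter_union, Finset.card_union_of_disjoint
    (Finset.disjoint_filter_filter hdisj)]
  have h1 : P.voters.filter (fun i => P.double.rel i a b = true) =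
      P.voters.filter (fun i => P.rel i a b = true) := by
    apply Finset.filter_congr
    intro i hi
    simp [Profile.double, hi]
  have h2 : ((P.voters.image fun i => i + K).filter
      (fun i => P.double.rel i a b = true)).card =
      (P.voters.filter (fun i => P.rel i a b = true)).card := by
    rw [Finset.filter_image]
    rw [Finset.card_image_of_injective _ (add_left_injective K)]
    congr 1
    apply Finset.filter_congr
    intro i hi
    simp [Profile.double, hshift i hi, ← hK]
  rw [h1, h2]
  show Support P a b + Support P a b = 2 * Support P a b
  omega

end MajorityAux

/-- Anonymity can be dropped: a voting method on the domain of profiles with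
two or three alternatives satisfying neutrality, weak positive responsiveness,
homogeneity, and block preservation agrees with majority voting on any
two-alternative profile with a unique majority winner. -/
theorem majority_without_anonymity {α : Type*} [DecidableEq α]
    (hX : ∃ x y z : α, x ≠ y ∧ x ≠ z ∧ y ≠ z)
    (F : Profile α → Finset α)
    (hF : ∀ P ∈ Dom23 α, (F P).Nonempty ∧ F P ⊆ P.alts)
    (neut : Neutrality (Dom23 α) F)
    (wpr : WeakPositiveResponsiveness (Dom23 α) F)
    (hom : Homogeneity (Dom23 α) F)
    (bp : BlockPreservation (Dom23 α) F) :
    ∀ P ∈ Dom23 α, ∀ a b : α, P.alts = {a, b} →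
      0 < Margin P a b → F P = {a} := by
  intro P hP a b halts hm
  have hab : a ≠ b := by
    rintro rfl
    simp [Margin] at hm
  have hcnt : Support P b a < Support P a b := by
    have h1 : (0 : ℤ) < (Support P a b : ℤ) - (Support P b a : ℤ) := hm
    omega
  obtain ⟨h2dom, h2sub⟩ := hom P hP
  obtain ⟨h4dom, h4sub⟩ := hom P.double h2dom
  have halts4 : P.double.double.alts = {a, b} := halts
  have hS4a : Support P.double.double a b = 2 * (2 * Support P a b) := by
    rw [support_double, support_double]
  have hS4b : Support P.double.double b a = 2 * (2 * Support P b a) := by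
    rw [support_double, support_double]
  have h3 : Support P.double.double b a + 3 ≤ Support P.double.double a b := by
    omega
  have hG : F P.double.double = {a} :=
    singleton_of_margin_ge3 F hF neut wpr bp h4dom halts4 hab h3
  by_cases hFa : F P = {a}
  · exact hFa
  · exfalso
    obtain ⟨hne, hsub⟩ := hF P hP
    have hbF : b ∈ F P := by
      by_contra hbF
      apply hFa
      refine (Finset.Nonempty.subset_singleton_iff hne).1 ?_
      intro x hx
      rcases mem_pair_iff'.1 (halts ▸ hsub hx) with rfl | rfl
      · simp
      · exact absurd hx hbF
    have : b ∈ F P.double.double := h4sub (h2sub hbF)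
    rw [hG, Finset.mem_singleton] at this
    exact hab this.symm

end MayMinimax
end
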